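/- Let c ≥ 1 and let E ⊆ ℂ be a set that is c-porous in ℂ and invariant under translation by 1 (i.e., E + 1 = E). Then for every r > 1 there exists a real number y₀ ≥ r + 1 such that the horizontal strip { w ∈ ℂ : y₀ − r < Im w < y₀ + r } is disjoint from E. -/

import Mathlib

/-- If `E ⊆ ℂ` is `c`-porous and invariant under translation by 1, then for every
`r > 1` there is an `E`-free horizontal strip of height `2r` centered at height
`y₀ ≥ r + 1`. -/
theorem stmt_11 (c : ℝ) (hc : 1 ≤ c) (E : Set ℂ)
    (hpor : ∀ z' : ℂ, ∀ r : ℝ, 0 < r →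
      ∃ z ∈ Metric.closedBall z' r, ∀ w ∈ Metric.ball z (r / c), w ∉ E)
    (hinv : ∀ z : ℂ, z + 1 ∈ E ↔ z ∈ E) :
    ∀ r : ℝ, 1 < r →
      ∃ y₀ : ℝ, r + 1 ≤ y₀ ∧ ∀ w ∈ E, ¬(y₀ - r < w.im ∧ w.im < y₀ + r) := by
  have hinvZ : ∀ n : ℤ, ∀ z : ℂ, z + (n : ℂ) ∈ E ↔ z ∈ E := by
    intro n
    induction n using Int.induction_on with
    | zero => simp
    | succ k ih =>
      intro z
      have h1 : z + (((k : ℤ) + 1 : ℤ) : ℂ) = (z + ((k : ℤ) : ℂ)) + 1 := by push_cast; ring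
      rw [h1, hinv, ih]
    | pred k ih =>
      intro z
      have h2 := hinv (z + ((-(k : ℤ) - 1 : ℤ) : ℂ))
      have h1 : (z + ((-(k : ℤ) - 1 : ℤ) : ℂ)) + 1 = z + ((-(k : ℤ) : ℤ) : ℂ) := by
        push_cast; ring
      rw [h1, ih] at h2
      exact h2.symm
  intro r hr
  have hc0 : (0 : ℝ) < c := lt_of_lt_of_le one_pos hc
  have hr0 : (0 : ℝ) < r := lt_trans one_pos hr
  have hs2 : (0 : ℝ) < Real.sqrt 2 := Real.sqrt_pos.mpr (by norm_num)
  set R : ℝ := Real.sqrt 2 * c * r with hR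
  have hR0 : 0 < R := by positivity
  obtain ⟨z, hz, hball⟩ := hpor (Complex.I * ((Real.sqrt 2 * c + 1) * r + 1)) R hR0
  refine ⟨z.im, ?_, ?_⟩
  · have hd : dist z (Complex.I * ((Real.sqrt 2 * c + 1) * r + 1)) ≤ R :=
      Metric.mem_closedBall.mp hz
    have him : |z.im - ((Real.sqrt 2 * c + 1) * r + 1)| ≤ R := by
      have := Complex.abs_im_le_norm (z - Complex.I * ((Real.sqrt 2 * c + 1) * r + 1))
      rw [Complex.dist_eq] at hd
      simp only [Complex.sub_im, Complex.mul_im, Complex.I_re, Complex.I_im,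
        Complex.ofReal_re, Complex.ofReal_im] at this
      have him' : (Complex.I * (((Real.sqrt 2 * c + 1) * r + 1 : ℝ) : ℂ)).im
          = (Real.sqrt 2 * c + 1) * r + 1 := by simp
      calc |z.im - ((Real.sqrt 2 * c + 1) * r + 1)|
          = |(z - Complex.I * (((Real.sqrt 2 * c + 1) * r + 1 : ℝ) : ℂ)).im| := by
            rw [Complex.sub_im, him']
        _ ≤ ‖z - Complex.I * (((Real.sqrt 2 * c + 1) * r + 1 : ℝ) : ℂ)‖ :=
            Complex.abs_im_le_norm _
        _ ≤ R := by
            convert hd using 3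
            push_cast; ring
    have := abs_le.mp him
    nlinarith [this.1]
  · rintro w hwE ⟨h1, h2⟩
    set n : ℤ := round (z.re - w.re) with hn
    have hround : |z.re - w.re - (n : ℝ)| ≤ 1 / 2 := by
      rw [hn]; exact abs_sub_round _
    have hwE' : w + (n : ℂ) ∈ E := (hinvZ n w).mpr hwE
    have hmem : w + (n : ℂ) ∈ Metric.ball z (R / c) := by
      rw [Metric.mem_ball, Complex.dist_eq]
      have hRc : R / c = Real.sqrt 2 * r := by
        field_simp [hR]; ring
      rw [hRc]
      have habs : ‖w + (n : ℂ) - z‖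
          = Real.sqrt ((w.re + (n : ℝ) - z.re) ^ 2 + (w.im - z.im) ^ 2) := by
        rw [Complex.norm_def, Complex.normSq_apply]
        congr 1
        simp [Complex.add_re, Complex.add_im, Complex.sub_re, Complex.sub_im]
        ring
      rw [habs]
      have h2r : Real.sqrt 2 * r = Real.sqrt (2 * r ^ 2) := by
        rw [Real.sqrt_mul (by norm_num), Real.sqrt_sq hr0.le]
      rw [h2r]
      apply Real.sqrt_lt_sqrt (by positivity)
      have hre : (w.re + (n : ℝ) - z.re) ^ 2 ≤ (1 / 2) ^ 2 := by
        have : |w.re + (n : ℝ) - z.re| ≤ 1 / 2 := by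
          rw [show w.re + (n : ℝ) - z.re = -(z.re - w.re - (n : ℝ)) by ring, abs_neg]
          exact hround
        nlinarith [abs_nonneg (w.re + (n : ℝ) - z.re), sq_abs (w.re + (n : ℝ) - z.re)]
      have him2 : (w.im - z.im) ^ 2 < r ^ 2 := by
        have : |w.im - z.im| < r := abs_lt.mpr ⟨by linarith, by linarith⟩
        nlinarith [abs_nonneg (w.im - z.im), sq_abs (w.im - z.im)]
      nlinarith
    exact hball _ hmem hwE'
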